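/- The toppling transformation is monotone: if η, ξ ∈ Ω with η(i)=2, ξ(i^η)=2, and ξ ≤ η pointwise, then T_{φ(i,η,ξ)} ξ ≤ T_i η pointwise, where i^η = i + k⁺(i,η) − k⁻(i,η) and φ(i,η,ξ) = i^η + k⁺(i^η,ξ) − k⁻(i^η,ξ). -/
import Mathlib

open Filter

noncomputable section

attribute [local instance] Classical.propDecidable

def IsConfig (η : ℤ → ℤ) : Prop := ∀ x, η x = 1 ∨ η x = 2

def e (i : ℤ) : ℤ → ℤ := fun x => if x = i then 1 else 0

def Kp (i : ℤ) (η : ℤ → ℤ) : Set ℕ := {j : ℕ | η (i + (j : ℤ)) = 1}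

def Km (i : ℤ) (η : ℤ → ℤ) : Set ℕ := {j : ℕ | 0 < j ∧ η (i - (j : ℤ)) = 1}

noncomputable def kplus (i : ℤ) (η : ℤ → ℤ) : ℕ := sInf (Kp i η)

noncomputable def kminus (i : ℤ) (η : ℤ → ℤ) : ℕ := sInf (Km i η)

noncomputable def T (i : ℤ) (η : ℤ → ℤ) : ℤ → ℤ :=
  if η i = 1 then η + e i
  else if (Kp i η).Nonempty then
    if (Km i η).Nonempty then
      η + e (i + (kplus i η : ℤ)) + e (i - (kminus i η : ℤ))
        - e (i + (kplus i η : ℤ) - (kminus i η : ℤ))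
    else η + e (i + (kplus i η : ℤ))
  else if (Km i η).Nonempty then η + e (i - (kminus i η : ℤ))
  else η

noncomputable def iEta (i : ℤ) (η : ℤ → ℤ) : ℤ :=
  i + (kplus i η : ℤ) - (kminus i η : ℤ)

lemma natInf_eq {s : Set ℕ} {w : ℕ} (hw : w ∈ s) (hmin : ∀ t, t < w → t ∉ s) :
    sInf s = w := by
  have h1 := Nat.sInf_le hw
  have h2 := Nat.sInf_mem ⟨w, hw⟩
  by_contra h
  exact hmin _ (lt_of_le_of_ne h1 h) h2

lemma kplus_spec {i : ℤ} {η : ℤ → ℤ} (hp : (Kp i η).Nonempty) :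
    η (i + (kplus i η : ℤ)) = 1 := Nat.sInf_mem hp

lemma kminus_spec {i : ℤ} {η : ℤ → ℤ} (hm : (Km i η).Nonempty) :
    0 < kminus i η ∧ η (i - (kminus i η : ℤ)) = 1 := Nat.sInf_mem hm

lemma kplus_pos {i : ℤ} {η : ℤ → ℤ} (hp : (Kp i η).Nonempty) (h2 : η i = 2) :
    0 < kplus i η := by
  rcases Nat.eq_zero_or_pos (kplus i η) with h | h
  · have := kplus_spec hp
    rw [h] at this
    simp at this
    omega
  · exact h

lemma two_between {i : ℤ} {η : ℤ → ℤ} (hη : IsConfig η)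
    (hp : (Kp i η).Nonempty) (hm : (Km i η).Nonempty) :
    ∀ x : ℤ, i - (kminus i η : ℤ) < x → x < i + (kplus i η : ℤ) → η x = 2 := by
  intro x h1 h2
  rcases le_or_gt i x with h | h
  · have htz : (((x - i).toNat : ℤ)) = x - i := Int.toNat_of_nonneg (by omega)
    have htk : (x - i).toNat < kplus i η := by omega
    have hne : (x - i).toNat ∉ Kp i η := Nat.notMem_of_lt_sInf htk
    simp only [Kp, Set.mem_setOf_eq] at hne
    rw [show i + ((x - i).toNat : ℤ) = x by omega] at hne
    rcases hη x with h' | h'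
    · exact absurd h' hne
    · exact h'
  · have htz : (((i - x).toNat : ℤ)) = i - x := Int.toNat_of_nonneg (by omega)
    have htk : (i - x).toNat < kminus i η := by omega
    have hne : (i - x).toNat ∉ Km i η := Nat.notMem_of_lt_sInf htk
    simp only [Km, Set.mem_setOf_eq, not_and] at hne
    have h0 : 0 < (i - x).toNat := by omega
    have hne' := hne h0
    rw [show i - ((i - x).toNat : ℤ) = x by omega] at hne'
    rcases hη x with h' | h'
    · exact absurd h' hne'
    · exact h'

lemma T_apply {i : ℤ} {η : ℤ → ℤ} (h1 : ¬ η i = 1) (hp : (Kp i η).Nonempty)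
    (hm : (Km i η).Nonempty) (x : ℤ) :
    T i η x = η x + e (i + (kplus i η : ℤ)) x + e (i - (kminus i η : ℤ)) x
      - e (i + (kplus i η : ℤ) - (kminus i η : ℤ)) x := by
  simp only [T, if_neg h1, if_pos hp, if_pos hm, Pi.add_apply, Pi.sub_apply]

theorem toppling_monotone (i : ℤ) (η ξ : ℤ → ℤ) (hη : IsConfig η) (hξ : IsConfig ξ)
    (hcrit : η i = 2) (hcrit' : ξ (iEta i η) = 2) (hle : ∀ x, ξ x ≤ η x)
    (hp : (Kp i η).Nonempty) (hm : (Km i η).Nonempty)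
    (hp' : (Kp (iEta i η) ξ).Nonempty) (hm' : (Km (iEta i η) ξ).Nonempty) :
    ∀ x, T (iEta (iEta i η) ξ) ξ x ≤ T i η x := by
  set j : ℤ := iEta i η with hj
  have hjval : j = i + (kplus i η : ℤ) - (kminus i η : ℤ) := rfl
  have hηtwo := two_between hη hp hm
  have hξtwo := two_between hξ hp' hm'
  have hηa : η (i + (kplus i η : ℤ)) = 1 := kplus_spec hp
  obtain ⟨hkm_pos, hηb⟩ := kminus_spec hm
  have hkp_pos : 0 < kplus i η := kplus_pos hp hcrit
  have hξa' : ξ (j + (kplus j ξ : ℤ)) = 1 := kplus_spec hp'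
  obtain ⟨hkm'_pos, hξb'⟩ := kminus_spec hm'
  have hkp'_pos : 0 < kplus j ξ := kplus_pos hp' hcrit'
  -- ξ equals 1 at the η-boundary points
  have hξa : ξ (i + (kplus i η : ℤ)) = 1 := by
    have := hle (i + (kplus i η : ℤ))
    rcases hξ (i + (kplus i η : ℤ)) with h | h <;> omega
  have hξb : ξ (i - (kminus i η : ℤ)) = 1 := by
    have := hle (i - (kminus i η : ℤ))
    rcases hξ (i - (kminus i η : ℤ)) with h | h <;> omega
  -- k⁺(j,ξ) ≤ k⁻(i,η) and k⁻(j,ξ) ≤ k⁺(i,η)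
  have hle1 : kplus j ξ ≤ kminus i η := by
    apply Nat.sInf_le
    show ξ (j + (kminus i η : ℤ)) = 1
    rw [show j + (kminus i η : ℤ) = i + (kplus i η : ℤ) by omega]
    exact hξa
  have hle2 : kminus j ξ ≤ kplus i η := by
    apply Nat.sInf_le
    refine ⟨hkp_pos, ?_⟩
    rw [show j - (kplus i η : ℤ) = i - (kminus i η : ℤ) by omega]
    exact hξb
  -- the toppled site of ξ
  have hφval : iEta j ξ = j + (kplus j ξ : ℤ) - (kminus j ξ : ℤ) := rfl
  have hξφ : ξ (iEta j ξ) = 2 := hξtwo _ (by omega) (by omega)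
  have hmemp : kminus j ξ ∈ Kp (iEta j ξ) ξ := by
    show ξ (iEta j ξ + (kminus j ξ : ℤ)) = 1
    rw [show iEta j ξ + (kminus j ξ : ℤ) = j + (kplus j ξ : ℤ) by omega]
    exact hξa'
  have hmemm : kplus j ξ ∈ Km (iEta j ξ) ξ := by
    refine ⟨hkp'_pos, ?_⟩
    rw [show iEta j ξ - (kplus j ξ : ℤ) = j - (kminus j ξ : ℤ) by omega]
    exact hξb'
  have hpφ : (Kp (iEta j ξ) ξ).Nonempty := ⟨_, hmemp⟩
  have hmφ : (Km (iEta j ξ) ξ).Nonempty := ⟨_, hmemm⟩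
  have hKpφ : kplus (iEta j ξ) ξ = kminus j ξ := by
    apply natInf_eq hmemp
    intro t ht hmem
    have h1 : ξ (iEta j ξ + (t : ℤ)) = 1 := hmem
    have h2 : ξ (iEta j ξ + (t : ℤ)) = 2 := hξtwo _ (by omega) (by omega)
    omega
  have hKmφ : kminus (iEta j ξ) ξ = kplus j ξ := by
    apply natInf_eq hmemm
    intro t ht hmem
    obtain ⟨ht0, h1⟩ := hmem
    have h2 : ξ (iEta j ξ - (t : ℤ)) = 2 := hξtwo _ (by omega) (by omega)
    omega
  intro x
  rw [T_apply (by omega) hpφ hmφ x, T_apply (show ¬ η i = 1 by omega) hp hm x,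
    hKpφ, hKmφ,
    show iEta j ξ + (kminus j ξ : ℤ) = j + (kplus j ξ : ℤ) by omega,
    show iEta j ξ - (kplus j ξ : ℤ) = j - (kminus j ξ : ℤ) by omega,
    show j + (kplus j ξ : ℤ) - (kplus j ξ : ℤ) = j by omega,
    show i + (kplus i η : ℤ) - (kminus i η : ℤ) = j by omega]
  simp only [e]
  set A' : ℤ := j + (kplus j ξ : ℤ) with hA'
  set B' : ℤ := j - (kminus j ξ : ℤ) with hB'
  set A : ℤ := i + (kplus i η : ℤ) with hA
  set B : ℤ := i - (kminus i η : ℤ) with hB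
  have key : ξ x + (if x = A' then (1:ℤ) else 0) + (if x = B' then 1 else 0) ≤
      η x + (if x = A then 1 else 0) + (if x = B then 1 else 0) := by
    by_cases h1 : x = A'
    · subst h1
      rw [if_pos rfl, if_neg (show ¬ A' = B' by omega)]
      by_cases h3 : A' = A
      · have hx : ξ A' = 1 := hξa'
        have hx2 : η A' = 1 := h3 ▸ hηa
        rw [if_pos h3]
        split_ifs <;> omega
      · have h2 : η A' = 2 := hηtwo A' (by omega) (by omega)
        rw [if_neg h3]
        split_ifs <;> omega
    · rw [if_neg h1]
      by_cases h2 : x = B'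
      · subst h2
        rw [if_pos rfl]
        have hB'A : ¬ B' = A := by omega
        rw [if_neg hB'A]
        by_cases h3 : B' = B
        · have hx2 : η B' = 1 := h3 ▸ hηb
          rw [if_pos h3]
          omega
        · have h2' : η B' = 2 := hηtwo B' (by omega) (by omega)
          rw [if_neg h3]
          omega
      · rw [if_neg h2]
        have := hle x
        split_ifs <;> omega
  exact sub_le_sub_right key _
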